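/- Let ψ ∈ L²([0,2π),ℂ) satisfy the Hardy condition, with coefficients d_n := (2π)^{-1}∫_0^{2π} ψ(θ) e^{inθ} dθ for n ≥ 0 (so ψ(θ) = ∑_{n≥0} d_n e^{-inθ} in L²). Then for every n ∈ ℕ, (2π)^{-1} ∫_0^{2π} θ ψ(θ) e^{inθ} dθ = π d_n + ∑_{m∈ℕ, m≠n} (i/(m−n)) d_m, where the series on the right converges. -/

import Mathlib

open MeasureTheory Real Set

open AddCircle Complex
open scoped InnerProductSpace

set_option maxHeartbeats 1000000

noncomputable section

namespace GWToeplitz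

instance fact2pi : Fact (0 < 2 * π) := ⟨by positivity⟩

lemma measurable_liftIco {E : Type*} [MeasurableSpace E] (g : ℝ → E) (hg : Measurable g) :
    Measurable (liftIco (2*π) 0 g) := by
  have : liftIco (2*π) 0 g = (g ∘ Subtype.val) ∘ (AddCircle.measurableEquivIco (2*π) 0) := rfl
  rw [this]
  exact (hg.comp measurable_subtype_coe).comp (AddCircle.measurableEquivIco (2*π) 0).measurable

lemma integrable_liftIco {E : Type*} [NormedAddCommGroup E] [MeasurableSpace E] [BorelSpace E]
    [SecondCountableTopology E]
    (g : ℝ → E) (hg : Measurable g) (h : IntegrableOn g (Ico 0 (2*π))) :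
    Integrable (liftIco (2*π) 0 g) (volume : Measure (AddCircle (2*π))) := by
  have hmeas : Measurable (liftIco (2*π) 0 g) := measurable_liftIco g hg
  rw [← (AddCircle.measurePreserving_mk (2*π) 0).integrable_comp hmeas.aestronglyMeasurable]
  rw [Measure.restrict_congr_set Ioo_ae_eq_Ioc.symm]
  have h' : IntegrableOn g (Ioo 0 (0 + 2*π)) := by
    apply h.mono_set; rw [zero_add]; exact Ioo_subset_Ico_self
  refine h'.congr_fun (fun x hx => ?_) measurableSet_Ioo
  exact (liftIco_coe_apply (Ioo_subset_Ico_self hx)).symm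

lemma memL2_liftIco (g : ℝ → ℂ) (hg : Measurable g)
    (h : IntegrableOn (fun θ => ‖g θ‖^2) (Ico 0 (2*π))) :
    MemLp (liftIco (2*π) 0 g) 2 haarAddCircle := by
  have hmeas := measurable_liftIco g hg
  have h2' := integrable_liftIco (fun θ => ‖g θ‖^2) (hg.norm.pow_const 2) h
  have h2 : Integrable (fun t => ‖liftIco (2*π) 0 g t‖^2) (volume : Measure (AddCircle (2*π))) := by
    have hfun : (fun t => ‖liftIco (2*π) 0 g t‖^2)
        = liftIco (2*π) 0 (fun θ => ‖g θ‖^2) := by funext t; rfl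
    rw [hfun]; exact h2'
  have hhaar : (haarAddCircle : Measure (AddCircle (2*π)))
      = (ENNReal.ofReal (2*π))⁻¹ • (volume : Measure (AddCircle (2*π))) := by
    rw [volume_eq_smul_haarAddCircle, smul_smul, ENNReal.inv_mul_cancel, one_smul]
    · simp only [ne_eq, ENNReal.ofReal_eq_zero, not_le]
      positivity
    · exact ENNReal.ofReal_ne_top
  rw [memLp_two_iff_integrable_sq_norm hmeas.aestronglyMeasurable, hhaar]
  exact h2.smul_measure (by simp [Real.pi_pos])

lemma fourier_eq (m : ℤ) (x : ℝ) :
    (fourier m (x : AddCircle (2*π)) : ℂ) = Complex.exp (Complex.I * (m:ℂ) * (x:ℂ)) := by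
  rw [fourier_coe_apply]
  congr 1
  have hπ : (π : ℂ) ≠ 0 := by
    simp only [ne_eq, Complex.ofReal_eq_zero]
    exact Real.pi_ne_zero
  push_cast
  field_simp

lemma fourierCoeff_liftIco (g : ℝ → ℂ) (m : ℤ) :
    fourierCoeff (liftIco (2*π) 0 g) m
      = ((1 / (2*π) : ℝ) : ℂ) * ∫ θ in Ico (0:ℝ) (2*π),
          g θ * Complex.exp (Complex.I * ((-m : ℤ):ℂ) * (θ:ℂ)) := by
  rw [fourierCoeff_eq_intervalIntegral _ m 0]
  rw [intervalIntegral.integral_of_le (by positivity : (0:ℝ) ≤ 0 + 2*π)]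
  rw [integral_Ioc_eq_integral_Ioo, zero_add, Complex.real_smul]
  rw [show (∫ θ in Ico (0:ℝ) (2*π), g θ * Complex.exp (Complex.I * ((-m : ℤ):ℂ) * (θ:ℂ)))
      = ∫ θ in Ioo (0:ℝ) (2*π), g θ * Complex.exp (Complex.I * ((-m : ℤ):ℂ) * (θ:ℂ)) from
    (integral_Ico_eq_integral_Ioo)]
  congr 1
  refine setIntegral_congr_fun measurableSet_Ioo fun x hx => ?_
  rw [smul_eq_mul, liftIco_coe_apply (by rw [zero_add]; exact Ioo_subset_Ico_self hx),
    fourier_eq, mul_comm]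

lemma fourierCoeffOn_one {a b : ℝ} (hab : a < b) {m : ℤ} (hm : m ≠ 0) :
    fourierCoeffOn hab (fun _ => (1:ℂ)) m = 0 := by
  haveI := Fact.mk (by linarith : 0 < b - a)
  rw [fourierCoeffOn_eq_integral]
  simp only [smul_eq_mul, mul_one, fourier_coe_apply]
  have hba : ((b - a : ℝ) : ℂ) ≠ 0 := by
    simp only [ne_eq, Complex.ofReal_eq_zero]
    linarith
  have hc : (2 * (π:ℂ) * Complex.I * ((-m : ℤ):ℂ) / ((b - a : ℝ):ℂ)) ≠ 0 := by
    apply div_ne_zero _ hba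
    simp [Real.pi_ne_zero, Complex.I_ne_zero, hm]
  have key : ∀ x : ℝ, 2 * (π:ℂ) * Complex.I * ((-m : ℤ):ℂ) * (x:ℂ) / ((b - a : ℝ):ℂ)
      = (2 * (π:ℂ) * Complex.I * ((-m : ℤ):ℂ) / ((b - a : ℝ):ℂ)) * (x:ℂ) := fun x => by ring
  simp_rw [key]
  rw [integral_exp_mul_complex hc]
  have : (2 * (π:ℂ) * Complex.I * ((-m : ℤ):ℂ) / ((b - a : ℝ):ℂ)) * (b:ℂ)
      = (2 * (π:ℂ) * Complex.I * ((-m : ℤ):ℂ) / ((b - a : ℝ):ℂ)) * (a:ℂ)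
        + (-m : ℤ) * (2 * (π:ℂ) * Complex.I) := by
    have hba' : (b:ℂ) - (a:ℂ) ≠ 0 := by
      rw [← Complex.ofReal_sub]; exact hba
    push_cast
    field_simp
    ring
  rw [this, Complex.exp_add, Complex.exp_int_mul_two_pi_mul_I]
  simp

lemma sawtooth_coeff_ne (m : ℤ) (hm : m ≠ 0) :
    fourierCoeff (liftIco (2*π) 0 (fun x : ℝ => (x:ℂ))) m = Complex.I / (m:ℂ) := by
  rw [fourierCoeff_liftIco_eq]
  have hderiv : ∀ x : ℝ, x ∈ Set.uIcc 0 (0+2*π) → HasDerivAt (fun y : ℝ => (y:ℂ)) 1 x :=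
    fun x _ => by simpa using (hasDerivAt_id x).ofReal_comp
  rw [fourierCoeffOn_of_hasDerivAt (lt_add_of_pos_right 0 fact2pi.out) hm hderiv
    intervalIntegrable_const]
  rw [fourierCoeffOn_one _ hm]
  rw [show ((0:ℝ) : AddCircle (0 + 2*π - 0)) = 0 from QuotientAddGroup.mk_zero _]
  rw [fourier_eval_zero]
  have hm' : (m:ℂ) ≠ 0 := Int.cast_ne_zero.mpr hm
  have hπ : (π : ℂ) ≠ 0 := by
    simp only [ne_eq, Complex.ofReal_eq_zero]; exact Real.pi_ne_zero
  have hI := Complex.I_ne_zero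
  push_cast
  field_simp
  ring_nf
  rw [Complex.I_sq]
  ring

lemma sawtooth_coeff_zero :
    fourierCoeff (liftIco (2*π) 0 (fun x : ℝ => (x:ℂ))) 0 = (π:ℂ) := by
  rw [fourierCoeff_liftIco]
  simp only [neg_zero, Int.cast_zero, mul_zero, zero_mul, Complex.exp_zero, mul_one]
  rw [show (∫ θ in Ico (0:ℝ) (2*π), (θ:ℂ)) = ∫ θ in Ioo (0:ℝ) (2*π), (θ:ℂ) from
    integral_Ico_eq_integral_Ioo]
  rw [← integral_Ioc_eq_integral_Ioo,
    ← intervalIntegral.integral_of_le (by positivity : (0:ℝ) ≤ 2*π)]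
  rw [intervalIntegral.integral_ofReal, integral_id]
  have hπ : (π : ℂ) ≠ 0 := by
    simp only [ne_eq, Complex.ofReal_eq_zero]; exact Real.pi_ne_zero
  push_cast
  field_simp
  ring

lemma fourierCoeff_congr_ae {f g : AddCircle (2*π) → ℂ} (h : f =ᵐ[haarAddCircle] g) (m : ℤ) :
    fourierCoeff f m = fourierCoeff g m := by
  unfold fourierCoeff
  exact integral_congr_ae (by filter_upwards [h] with t ht; rw [ht])

end GWToeplitz

end

open GWToeplitz

/-- **The Garrison–Wong operator acts as the Toeplitz operator `ψ ↦ P(Qψ)`.**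
Let `ψ ∈ L²([0,2π),ℂ)` satisfy the Hardy condition, with Fourier coefficients
`d_n = (2π)⁻¹ ∫₀^{2π} ψ(θ) e^{inθ} dθ` for `n ∈ ℕ`.  Then for every `n ∈ ℕ`,
`(2π)⁻¹ ∫₀^{2π} θ ψ(θ) e^{inθ} dθ = π d_n + ∑_{m≠n} (i/(m-n)) d_m`,
the series on the right converging. -/
theorem garrison_wong_toeplitz_action
    (ψ : ℝ → ℂ) (hmeas : Measurable ψ)
    (hL2 : IntegrableOn (fun θ => ‖ψ θ‖ ^ 2) (Ico 0 (2 * π)))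
    (hHardy : ∀ n : ℤ, n < 0 →
      ∫ θ in Ico (0 : ℝ) (2 * π), ψ θ * Complex.exp (Complex.I * (n : ℂ) * (θ : ℂ)) = 0)
    (d : ℕ → ℂ)
    (hd : ∀ n : ℕ, d n = ((1 / (2 * π) : ℝ) : ℂ) *
      ∫ θ in Ico (0 : ℝ) (2 * π), ψ θ * Complex.exp (Complex.I * (n : ℂ) * (θ : ℂ))) :
    ∀ n : ℕ,
      HasSum (fun m : ℕ => if m = n then 0 else (Complex.I / ((m : ℂ) - (n : ℂ))) * d m)
        (((1 / (2 * π) : ℝ) : ℂ) *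
          (∫ θ in Ico (0 : ℝ) (2 * π),
            (θ : ℂ) * ψ θ * Complex.exp (Complex.I * (n : ℂ) * (θ : ℂ)))
          - (π : ℂ) * d n) := by
  intro n
  classical
  set E : ℤ → ℂ := fun k => ((1 / (2 * π) : ℝ) : ℂ) *
      ∫ θ in Ico (0 : ℝ) (2 * π), ψ θ * Complex.exp (Complex.I * (k : ℂ) * (θ : ℂ)) with hE
  have hE_neg : ∀ k : ℤ, k < 0 → E k = 0 := fun k hk => by
    simp only [hE, hHardy k hk, mul_zero]
  have hE_nat : ∀ m : ℕ, E (m : ℤ) = d m := fun m => by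
    rw [hd m, hE]
    push_cast
    ring_nf
  -- the two L² functions
  set Φ : ℝ → ℂ := fun θ => (starRingEnd ℂ) (ψ θ * Complex.exp (Complex.I * (n:ℂ) * (θ:ℂ)))
    with hΦ
  have hexpmeas : Measurable fun θ : ℝ => Complex.exp (Complex.I * (n:ℂ) * (θ:ℂ)) :=
    Complex.measurable_exp.comp (Complex.measurable_ofReal.const_mul _)
  have hΦmeas : Measurable Φ := Complex.continuous_conj.measurable.comp (hmeas.mul hexpmeas)
  have hΦL2 : IntegrableOn (fun θ => ‖Φ θ‖^2) (Ico 0 (2*π)) := by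
    have hfun : (fun θ => ‖Φ θ‖^2) = fun θ => ‖ψ θ‖^2 := funext fun θ => by
      simp only [hΦ, RCLike.norm_conj, norm_mul, Complex.norm_exp]
      have : (Complex.I * (n:ℂ) * (θ:ℂ)).re = 0 := by simp
      rw [this]
      simp
    rw [hfun]; exact hL2
  have memX := memL2_liftIco Φ hΦmeas hΦL2
  have memY : MemLp (liftIco (2*π) 0 (fun x : ℝ => (x:ℂ))) 2 haarAddCircle := by
    refine MemLp.of_bound ((measurable_liftIco _ Complex.measurable_ofReal).aestronglyMeasurable)
      (2*π) (Filter.Eventually.of_forall fun t => ?_)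
    have h1 : liftIco (2*π) 0 (fun x : ℝ => (x:ℂ)) t = ((equivIco (2*π) 0 t : ℝ) : ℂ) := rfl
    have h2 := (equivIco (2*π) 0 t).2
    rw [h1, Complex.norm_real, Real.norm_eq_abs, _root_.abs_of_nonneg h2.1]
    have := h2.2
    linarith [this]
  set X := memX.toLp _ with hX
  set Y := memY.toLp _ with hYdef
  have hXcoe : (X : AddCircle (2*π) → ℂ) =ᵐ[haarAddCircle] liftIco (2*π) 0 Φ := memX.coeFn_toLp
  have hYcoe : (Y : AddCircle (2*π) → ℂ) =ᵐ[haarAddCircle]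
      liftIco (2*π) 0 (fun x : ℝ => (x:ℂ)) := memY.coeFn_toLp
  -- the key conjugation identity
  have key : ∀ m : ℤ, (starRingEnd ℂ) (fourierCoeff (liftIco (2*π) 0 Φ) m) = E (n + m) := by
    intro m
    rw [fourierCoeff_liftIco, map_mul, Complex.conj_ofReal, ← integral_conj, hE]
    congr 1
    refine setIntegral_congr_fun measurableSet_Ico fun θ _ => ?_
    simp only [hΦ]
    rw [map_mul, Complex.conj_conj, ← Complex.exp_conj, mul_assoc, ← Complex.exp_add]
    congr 1
    simp only [map_mul, Complex.conj_I, Complex.conj_ofReal, map_neg, map_intCast]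
    push_cast
    ring
  -- inner products as Fourier coefficients
  have h1 : ∀ m : ℤ, (⟪X, fourierBasis m⟫_ℂ) = E (n + m) := by
    intro m
    rw [← inner_conj_symm, ← fourierBasis.repr_apply_apply, fourierBasis_repr,
      fourierCoeff_congr_ae hXcoe m, key m]
  have h2 : ∀ m : ℤ, (⟪fourierBasis m, Y⟫_ℂ)
      = fourierCoeff (liftIco (2*π) 0 (fun x : ℝ => (x:ℂ))) m := by
    intro m
    rw [← fourierBasis.repr_apply_apply, fourierBasis_repr, fourierCoeff_congr_ae hYcoe m]
  -- the inner product ⟪X, Y⟫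
  set G : ℝ → ℂ := fun θ => (θ:ℂ) * ψ θ * Complex.exp (Complex.I * (n:ℂ) * (θ:ℂ)) with hG
  have hinnerXY : (⟪X, Y⟫_ℂ) = ((1 / (2 * π) : ℝ) : ℂ) *
      (∫ θ in Ico (0 : ℝ) (2 * π),
        (θ : ℂ) * ψ θ * Complex.exp (Complex.I * (n : ℂ) * (θ : ℂ))) := by
    rw [L2.inner_def]
    have step1 : (∫ t, (⟪X t, Y t⟫_ℂ) ∂haarAddCircle)
        = ∫ t, liftIco (2*π) 0 G t ∂haarAddCircle := by
      apply integral_congr_ae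
      filter_upwards [hXcoe, hYcoe] with t ha hb
      rw [RCLike.inner_apply, ha, hb]
      show (((equivIco (2*π) 0 t : ℝ)):ℂ)
            * (starRingEnd ℂ) (Φ ((equivIco (2*π) 0 t : ℝ)))
          = G ((equivIco (2*π) 0 t : ℝ))
      simp only [hΦ, hG, map_mul, Complex.conj_conj]
      ring
    rw [step1]
    have hc0 : fourierCoeff (liftIco (2*π) 0 G) 0 = ∫ t, liftIco (2*π) 0 G t ∂haarAddCircle := by
      unfold fourierCoeff
      simp
    rw [← hc0, fourierCoeff_liftIco]
    simp only [neg_zero, Int.cast_zero, mul_zero, zero_mul, Complex.exp_zero, mul_one]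
    rfl
  -- Parseval
  have hPar := fourierBasis.hasSum_inner_mul_inner X Y
  have hfe : (fun m : ℤ => (⟪X, fourierBasis m⟫_ℂ) * ⟪fourierBasis m, Y⟫_ℂ)
      = fun m : ℤ => E ((n:ℤ) + m)
          * fourierCoeff (liftIco (2*π) 0 (fun x : ℝ => (x:ℂ))) m :=
    funext fun m => by rw [h1 m, h2 m]
  rw [hfe, hinnerXY] at hPar
  -- remove the m = 0 term
  set f : ℤ → ℂ := fun m => E ((n:ℤ) + m)
      * fourierCoeff (liftIco (2*π) 0 (fun x : ℝ => (x:ℂ))) m with hf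
  have hf0 : f 0 = (π:ℂ) * d n := by
    rw [hf]
    simp only [add_zero, sawtooth_coeff_zero]
    rw [hE_nat n, mul_comm]
  have hupd := hPar.update 0 0
  have hval : (0:ℂ) - f 0 + (((1 / (2 * π) : ℝ) : ℂ) *
      ∫ θ in Ico (0 : ℝ) (2 * π),
        (θ : ℂ) * ψ θ * Complex.exp (Complex.I * (n : ℂ) * (θ : ℂ)))
      = (((1 / (2 * π) : ℝ) : ℂ) *
      (∫ θ in Ico (0 : ℝ) (2 * π),
        (θ : ℂ) * ψ θ * Complex.exp (Complex.I * (n : ℂ) * (θ : ℂ)))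
        - (π : ℂ) * d n) := by
    rw [hf0]; ring
  rw [hval] at hupd
  -- re-index along ℕ → ℤ
  have hinj : Function.Injective (fun m : ℕ => (m:ℤ) - (n:ℤ)) := by
    intro a b hab
    simp only at hab
    omega
  have hvanish : ∀ x ∉ Set.range (fun m : ℕ => (m:ℤ) - (n:ℤ)),
      Function.update f 0 0 x = 0 := by
    intro x hx
    have hxneg : (n:ℤ) + x < 0 := by
      by_contra hcon
      push_neg at hcon
      refine hx ⟨((n:ℤ) + x).toNat, ?_⟩
      show ((((n:ℤ) + x).toNat : ℤ)) - (n:ℤ) = x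
      omega
    have hx0 : x ≠ 0 := by omega
    rw [Function.update_of_ne hx0, hf]
    simp only
    rw [hE_neg _ hxneg, zero_mul]
  have htarget : (fun m : ℕ => if m = n then 0 else (Complex.I / ((m : ℂ) - (n : ℂ))) * d m)
      = (Function.update f 0 0) ∘ (fun m : ℕ => (m:ℤ) - (n:ℤ)) := by
    funext m
    by_cases hmn : m = n
    · subst hmn
      rw [Function.comp_apply, show (m:ℤ) - (m:ℤ) = 0 from sub_self _, Function.update_self]
      simp
    · have hjm : (m:ℤ) - (n:ℤ) ≠ 0 := by
        intro hcon
        exact hmn (by omega)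
      simp only [Function.comp_apply, if_neg hmn]
      rw [Function.update_of_ne hjm, hf]
      simp only
      have hidx : (n:ℤ) + ((m:ℤ) - (n:ℤ)) = (m:ℤ) := by ring
      rw [hidx, hE_nat m, sawtooth_coeff_ne _ hjm]
      have : (((m:ℤ) - (n:ℤ) : ℤ) : ℂ) = (m:ℂ) - (n:ℂ) := by push_cast; ring
      rw [this, mul_comm]
  rw [htarget]
  exact (hinj.hasSum_iff hvanish).mpr hupd
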